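/- Under the assumptions that X₁,…,Xₙ are mutually independent and Y₁,…,Yₙ are conditionally independent given (X₁,…,Xₙ), for any A ⊆ {1,…,n} and a ∉ A, the marginal difference satisfies F(A ∪ {a}) − F(A) = H(X_a | X_A) − H(X_a | Y_{(A∪{a})ᶜ}, X_{(A∪{a})ᶜ}) − H(Y_a | Y_{(A∪{a})ᶜ}, X_{Aᶜ}) + H(Y_a | X_{{1,…,n}}), where F(A) = I(X_A ; Y_{Aᶜ} | X_{Aᶜ}). -/

import Mathlib

open Finset

/-- Probability that the random variable `Z` takes the value `z`. -/
noncomputable def prob' {Ω : Type*} [Fintype Ω] (μ : Ω → ℝ) {α : Type*} [DecidableEq α]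
    (Z : Ω → α) (z : α) : ℝ :=
  ∑ ω ∈ Finset.univ.filter (fun ω => Z ω = z), μ ω

/-- Shannon entropy (base 2) of a finitely-valued random variable. -/
noncomputable def ent' {Ω : Type*} [Fintype Ω] (μ : Ω → ℝ) {α : Type*} [Fintype α]
    [DecidableEq α] (Z : Ω → α) : ℝ :=
  -∑ z : α, prob' μ Z z * Real.logb 2 (prob' μ Z z)

/-- Conditional Shannon entropy `H(Z | W) = H(Z, W) − H(W)`. -/
noncomputable def condEnt' {Ω : Type*} [Fintype Ω] (μ : Ω → ℝ) {α β : Type*}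
    [Fintype α] [DecidableEq α] [Fintype β] [DecidableEq β]
    (Z : Ω → α) (W : Ω → β) : ℝ :=
  ent' μ (fun ω => (Z ω, W ω)) - ent' μ W

/-- Conditional mutual information `I(X ; Y | Z) = H(X|Z) + H(Y|Z) − H(X,Y|Z)`. -/
noncomputable def condMI' {Ω : Type*} [Fintype Ω] (μ : Ω → ℝ) {α β γ : Type*}
    [Fintype α] [DecidableEq α] [Fintype β] [DecidableEq β] [Fintype γ] [DecidableEq γ]
    (X : Ω → α) (Y : Ω → β) (Z : Ω → γ) : ℝ :=
  condEnt' μ X Z + condEnt' μ Y Z - condEnt' μ (fun ω => (X ω, Y ω)) Z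

section basic
set_option linter.unusedSectionVars false
variable {Ω : Type*} [Fintype Ω] (μ : Ω → ℝ) {α β γ : Type*}
variable [Fintype α] [DecidableEq α] [Fintype β] [DecidableEq β] [Fintype γ] [DecidableEq γ]

lemma prob'_nonneg (hμ0 : ∀ ω, 0 ≤ μ ω) (Z : Ω → α) (z : α) :
    0 ≤ prob' μ Z z :=
  Finset.sum_nonneg fun ω _ => hμ0 ω

lemma sum_prob' (Z : Ω → α) :
    ∑ z, prob' μ Z z = ∑ ω, μ ω :=
  Finset.sum_fiberwise _ _ _

lemma prob'_comp' (f : α → β) (hf : Function.Injective f)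
    (Z : Ω → α) (a : α) (b : β) (hb : f a = b) :
    prob' μ (fun ω => f (Z ω)) b = prob' μ Z a := by
  subst hb
  unfold prob'
  congr 1
  ext ω
  simp [hf.eq_iff]

lemma prob'_comp_zero (f : α → β) (Z : Ω → α) (b : β)
    (hb : ∀ a, f a ≠ b) : prob' μ (fun ω => f (Z ω)) b = 0 := by
  unfold prob'
  apply Finset.sum_eq_zero
  intro ω hω
  simp only [Finset.mem_filter] at hω
  exact absurd hω.2 (hb (Z ω))

lemma ent'_comp
    (f : α → β) (hf : Function.Injective f) (Z : Ω → α) :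
    ent' μ (fun ω => f (Z ω)) = ent' μ Z := by
  unfold ent'
  congr 1
  rw [← Finset.sum_subset (Finset.subset_univ (Finset.univ.image f))]
  · rw [Finset.sum_image (fun a _ a' _ h => hf h)]
    refine Finset.sum_congr rfl fun a _ => ?_
    rw [prob'_comp' μ f hf Z a (f a) rfl]
  · intro b _ hb
    have : prob' μ (fun ω => f (Z ω)) b = 0 := by
      apply prob'_comp_zero
      intro a hab
      exact hb (Finset.mem_image.mpr ⟨a, Finset.mem_univ a, hab⟩)
    rw [this]
    simp

lemma prob'_sum_fst (Z : Ω → α) (W : Ω → β)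
    (w : β) : ∑ z, prob' μ (fun ω => (Z ω, W ω)) (z, w) = prob' μ W w := by
  unfold prob'
  rw [← Finset.sum_fiberwise_of_maps_to (g := Z) (t := Finset.univ)
        (fun ω _ => Finset.mem_univ (Z ω)) μ]
  refine Finset.sum_congr rfl fun z _ => ?_
  congr 1
  ext ω
  simp only [Finset.mem_filter, Finset.mem_univ, true_and, Prod.mk.injEq]
  tauto

lemma prob'_le_snd (hμ0 : ∀ ω, 0 ≤ μ ω)
    (Z : Ω → α) (W : Ω → β) (z : α) (w : β) :
    prob' μ (fun ω => (Z ω, W ω)) (z, w) ≤ prob' μ W w := by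
  apply Finset.sum_le_sum_of_subset_of_nonneg
  · intro ω hω
    simp only [Finset.mem_filter, Finset.mem_univ, true_and, Prod.mk.injEq] at hω ⊢
    exact hω.2
  · intro ω _ _; exact hμ0 ω

lemma prob'_mid (U : Ω → α) (V : Ω → β) (W : Ω → γ) (u : α) (v : β) (w : γ) :
    prob' μ (fun ω => (U ω, V ω, W ω)) (u, v, w)
      = prob' μ (fun ω => (V ω, U ω, W ω)) (v, u, w) := by
  unfold prob'
  congr 1
  ext ω
  simp only [Finset.mem_filter, Finset.mem_univ, true_and, Prod.mk.injEq]
  tauto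

lemma ent'_pair_of_indep (hμ1 : ∑ ω, μ ω = 1) (Z : Ω → α) (W : Ω → β)
    (h : ∀ z w, prob' μ (fun ω => (Z ω, W ω)) (z, w) = prob' μ Z z * prob' μ W w) :
    ent' μ (fun ω => (Z ω, W ω)) = ent' μ Z + ent' μ W := by
  unfold ent'
  rw [Fintype.sum_prod_type]
  have key : ∀ z w, prob' μ (fun ω => (Z ω, W ω)) (z, w)
      * Real.logb 2 (prob' μ (fun ω => (Z ω, W ω)) (z, w))
      = prob' μ Z z * prob' μ W w * Real.logb 2 (prob' μ Z z)
        + prob' μ Z z * prob' μ W w * Real.logb 2 (prob' μ W w) := by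
    intro z w
    rw [h z w]
    by_cases hz : prob' μ Z z = 0
    · simp [hz]
    by_cases hw : prob' μ W w = 0
    · simp [hw]
    rw [Real.logb_mul hz hw]
    ring
  have step : ∑ z, ∑ w, prob' μ (fun ω => (Z ω, W ω)) (z, w)
      * Real.logb 2 (prob' μ (fun ω => (Z ω, W ω)) (z, w))
      = ∑ z, ∑ w, (prob' μ Z z * prob' μ W w * Real.logb 2 (prob' μ Z z)
        + prob' μ Z z * prob' μ W w * Real.logb 2 (prob' μ W w)) :=
    Finset.sum_congr rfl fun z _ => Finset.sum_congr rfl fun w _ => key z w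
  rw [step]
  have h1 : ∑ z, ∑ w, prob' μ Z z * prob' μ W w * Real.logb 2 (prob' μ Z z)
      = ∑ z, prob' μ Z z * Real.logb 2 (prob' μ Z z) := by
    refine Finset.sum_congr rfl fun z _ => ?_
    rw [← Finset.sum_mul, ← Finset.mul_sum, sum_prob' μ W, hμ1]
    ring
  have h2 : ∑ z, ∑ w, prob' μ Z z * prob' μ W w * Real.logb 2 (prob' μ W w)
      = ∑ w, prob' μ W w * Real.logb 2 (prob' μ W w) := by
    rw [Finset.sum_comm]
    refine Finset.sum_congr rfl fun w _ => ?_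
    calc ∑ z, prob' μ Z z * prob' μ W w * Real.logb 2 (prob' μ W w)
        = (∑ z, prob' μ Z z) * (prob' μ W w * Real.logb 2 (prob' μ W w)) := by
          rw [Finset.sum_mul]
          exact Finset.sum_congr rfl fun z _ => mul_assoc _ _ _
      _ = _ := by rw [sum_prob' μ Z, hμ1, one_mul]
  simp only [Finset.sum_add_distrib]
  rw [h1, h2]
  ring

lemma ent'_condIndep (hμ0 : ∀ ω, 0 ≤ μ ω) (U : Ω → α) (V : Ω → β) (W : Ω → γ)
    (h : ∀ u v w, prob' μ (fun ω => (U ω, V ω, W ω)) (u, v, w) * prob' μ W w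
      = prob' μ (fun ω => (U ω, W ω)) (u, w) * prob' μ (fun ω => (V ω, W ω)) (v, w)) :
    ent' μ (fun ω => (U ω, V ω, W ω)) + ent' μ W
      = ent' μ (fun ω => (U ω, W ω)) + ent' μ (fun ω => (V ω, W ω)) := by
  have m1 : ∀ q : β × γ, ∑ u, prob' μ (fun ω => (U ω, V ω, W ω)) (u, q)
      = prob' μ (fun ω => (V ω, W ω)) q :=
    fun q => prob'_sum_fst μ U (fun ω => (V ω, W ω)) q
  have m2 : ∀ u w, ∑ v, prob' μ (fun ω => (U ω, V ω, W ω)) (u, v, w)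
      = prob' μ (fun ω => (U ω, W ω)) (u, w) := by
    intro u w
    have : ∀ v, prob' μ (fun ω => (U ω, V ω, W ω)) (u, v, w)
        = prob' μ (fun ω => (V ω, U ω, W ω)) (v, u, w) := fun v => prob'_mid μ U V W u v w
    simp only [this]
    exact prob'_sum_fst μ V (fun ω => (U ω, W ω)) (u, w)
  have m3 : ∀ w, ∑ v, prob' μ (fun ω => (V ω, W ω)) (v, w) = prob' μ W w :=
    fun w => prob'_sum_fst μ V W w
  -- claim A : ent' W as triple sum
  have cA : ∑ ρ : α × β × γ, prob' μ (fun ω => (U ω, V ω, W ω)) ρ * Real.logb 2 (prob' μ W ρ.2.2)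
      = ∑ w, prob' μ W w * Real.logb 2 (prob' μ W w) := by
    rw [Fintype.sum_prod_type, Finset.sum_comm]
    have e1 : ∀ q : β × γ, ∑ u, prob' μ (fun ω => (U ω, V ω, W ω)) (u, q) * Real.logb 2 (prob' μ W q.2)
        = prob' μ (fun ω => (V ω, W ω)) q * Real.logb 2 (prob' μ W q.2) := by
      intro q
      rw [← Finset.sum_mul, m1 q]
    rw [Finset.sum_congr rfl fun q _ => e1 q, Fintype.sum_prod_type, Finset.sum_comm]
    refine Finset.sum_congr rfl fun w _ => ?_
    dsimp only
    rw [← Finset.sum_mul, m3 w]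
  -- claim B : ent' (U,W) as triple sum
  have cB : ∑ ρ : α × β × γ, prob' μ (fun ω => (U ω, V ω, W ω)) ρ
        * Real.logb 2 (prob' μ (fun ω => (U ω, W ω)) (ρ.1, ρ.2.2))
      = ∑ p : α × γ, prob' μ (fun ω => (U ω, W ω)) p
        * Real.logb 2 (prob' μ (fun ω => (U ω, W ω)) p) := by
    rw [Fintype.sum_prod_type, Fintype.sum_prod_type]
    refine Finset.sum_congr rfl fun u _ => ?_
    rw [Fintype.sum_prod_type, Finset.sum_comm]
    refine Finset.sum_congr rfl fun w _ => ?_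
    dsimp only
    rw [← Finset.sum_mul, m2 u w]
  -- claim C : ent' (V,W) as triple sum
  have cC : ∑ ρ : α × β × γ, prob' μ (fun ω => (U ω, V ω, W ω)) ρ
        * Real.logb 2 (prob' μ (fun ω => (V ω, W ω)) ρ.2)
      = ∑ q : β × γ, prob' μ (fun ω => (V ω, W ω)) q
        * Real.logb 2 (prob' μ (fun ω => (V ω, W ω)) q) := by
    rw [Fintype.sum_prod_type, Finset.sum_comm]
    refine Finset.sum_congr rfl fun q _ => ?_
    dsimp only
    rw [← Finset.sum_mul, m1 q]
  unfold ent'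
  rw [← cA, ← cB, ← cC]
  rw [← neg_add, ← neg_add, ← Finset.sum_add_distrib, ← Finset.sum_add_distrib, neg_inj]
  refine Finset.sum_congr rfl fun ρ _ => ?_
  obtain ⟨u, v, w⟩ := ρ
  simp only
  set t := prob' μ (fun ω => (U ω, V ω, W ω)) (u, v, w) with hts
  by_cases ht : t = 0
  · rw [ht]; ring
  have htpos : 0 < t := lt_of_le_of_ne (prob'_nonneg μ hμ0 _ _) (Ne.symm ht)
  have hUW : t ≤ prob' μ (fun ω => (U ω, W ω)) (u, w) := by
    rw [hts, prob'_mid μ U V W u v w]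
    exact prob'_le_snd μ hμ0 V (fun ω => (U ω, W ω)) v (u, w)
  have hVW : t ≤ prob' μ (fun ω => (V ω, W ω)) (v, w) :=
    prob'_le_snd μ hμ0 U (fun ω => (V ω, W ω)) u (v, w)
  have hW : prob' μ (fun ω => (V ω, W ω)) (v, w) ≤ prob' μ W w :=
    prob'_le_snd μ hμ0 V W v w
  have hUWpos : 0 < prob' μ (fun ω => (U ω, W ω)) (u, w) := lt_of_lt_of_le htpos hUW
  have hVWpos : 0 < prob' μ (fun ω => (V ω, W ω)) (v, w) := lt_of_lt_of_le htpos hVW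
  have hWpos : 0 < prob' μ W w := lt_of_lt_of_le hVWpos hW
  have key : Real.logb 2 t + Real.logb 2 (prob' μ W w)
      = Real.logb 2 (prob' μ (fun ω => (U ω, W ω)) (u, w))
        + Real.logb 2 (prob' μ (fun ω => (V ω, W ω)) (v, w)) := by
    rw [← Real.logb_mul ht (ne_of_gt hWpos), ← Real.logb_mul (ne_of_gt hUWpos) (ne_of_gt hVWpos)]
    rw [hts, h u v w]
  nlinarith [key]

lemma prob'_comp_sum (g : α → β) (Z : Ω → α)
    (b : β) : prob' μ (fun ω => g (Z ω)) b
      = ∑ x ∈ Finset.univ.filter (fun x => g x = b), prob' μ Z x := by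
  unfold prob'
  rw [← Finset.sum_fiberwise_of_maps_to (g := Z)
      (t := Finset.univ.filter (fun x => g x = b))
      (fun ω hω => by
        simp only [Finset.mem_filter, Finset.mem_univ, true_and] at hω ⊢
        exact hω) μ]
  refine Finset.sum_congr rfl fun x hx => ?_
  simp only [Finset.mem_filter, Finset.mem_univ, true_and] at hx
  congr 1
  ext ω
  simp only [Finset.mem_filter, Finset.mem_univ, true_and]
  constructor
  · exact fun h => h.2
  · intro h
    exact ⟨by rw [h, hx], h⟩

end basic

lemma sum_constrained {n : ℕ} {α : Type*} [Fintype α] [DecidableEq α]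
    (p : Fin n → α → ℝ) (hp : ∀ i, ∑ v, p i v = 1) (T : Finset (Fin n)) (w : Fin n → α) :
    ∑ x ∈ Finset.univ.filter (fun x : Fin n → α => ∀ i ∈ T, x i = w i), ∏ i, p i (x i)
      = ∏ i ∈ T, p i (w i) := by
  have hset : Finset.univ.filter (fun x : Fin n → α => ∀ i ∈ T, x i = w i)
      = Fintype.piFinset (fun i => if i ∈ T then {w i} else Finset.univ) := by
    ext x
    simp only [Finset.mem_filter, Finset.mem_univ, true_and, Fintype.mem_piFinset]
    constructor
    · intro hx i
      by_cases hi : i ∈ T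
      · simp [hi, hx i hi]
      · simp [hi]
    · intro hx i hi
      have := hx i
      simpa [hi] using this
  rw [hset, ← Finset.prod_univ_sum]
  have : ∀ i, (∑ v ∈ (if i ∈ T then ({w i} : Finset α) else Finset.univ), p i v)
      = if i ∈ T then p i (w i) else 1 := by
    intro i
    by_cases hi : i ∈ T <;> simp [hi, hp i]
  rw [Finset.prod_congr rfl fun i _ => this i]
  rw [Finset.prod_ite_mem Finset.univ T (fun i => p i (w i)), Finset.univ_inter]

lemma probX_pair {Ω α : Type*} [Fintype Ω] [Fintype α] [DecidableEq α] {n : ℕ}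
    (μ : Ω → ℝ) (hμ1 : ∑ ω, μ ω = 1) (X : Fin n → Ω → α)
    (hX : ∀ x : Fin n → α, prob' μ (fun ω i => X i ω) x = ∏ i, prob' μ (X i) (x i))
    (S : Finset (Fin n)) (a : Fin n) (ha : a ∉ S) (xa : α) (xs : {i // i ∈ S} → α) :
    prob' μ (fun ω => (X a ω, fun i : {i // i ∈ S} => X i ω)) (xa, xs)
      = prob' μ (X a) xa * prob' μ (fun ω (i : {i // i ∈ S}) => X i ω) xs := by
  classical
  set w : Fin n → α := fun i => if h : i ∈ S then xs ⟨i, h⟩ else xa with hw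
  have hp : ∀ i : Fin n, ∑ v, prob' μ (X i) v = 1 := by
    intro i; rw [sum_prob' μ (X i), hμ1]
  -- pair probability
  have e1 : prob' μ (fun ω => (X a ω, fun i : {i // i ∈ S} => X i ω)) (xa, xs)
      = ∑ x ∈ Finset.univ.filter
          (fun x : Fin n → α => (x a, fun i : {i // i ∈ S} => x i) = (xa, xs)),
          prob' μ (fun ω (i : Fin n) => X i ω) x :=
    prob'_comp_sum μ (fun x : Fin n → α => (x a, fun i : {i // i ∈ S} => x i))
      (fun ω (i : Fin n) => X i ω) (xa, xs)
  have hfilter1 : Finset.univ.filter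
        (fun x : Fin n → α => (x a, fun i : {i // i ∈ S} => x i) = (xa, xs))
      = Finset.univ.filter (fun x : Fin n → α => ∀ i ∈ insert a S, x i = w i) := by
    ext x
    simp only [Finset.mem_filter, Finset.mem_univ, true_and, Prod.mk.injEq]
    constructor
    · rintro ⟨h1, h2⟩ i hi
      rcases Finset.mem_insert.mp hi with rfl | hiS
      · rw [hw]; simp [ha, h1]
      · rw [hw]; simp only [hiS, dif_pos]
        exact congrFun h2 ⟨i, hiS⟩
    · intro h
      constructor
      · simpa [hw, ha] using h a (Finset.mem_insert_self a S)
      · funext i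
        have := h i.1 (Finset.mem_insert_of_mem i.2)
        rw [hw] at this
        simpa [i.2] using this
  have e2 : prob' μ (fun ω (i : {i // i ∈ S}) => X i ω) xs
      = ∑ x ∈ Finset.univ.filter
          (fun x : Fin n → α => (fun i : {i // i ∈ S} => x i) = xs),
          prob' μ (fun ω (i : Fin n) => X i ω) x :=
    prob'_comp_sum μ (fun x : Fin n → α => (fun i : {i // i ∈ S} => x i))
      (fun ω (i : Fin n) => X i ω) xs
  have hfilter2 : Finset.univ.filter
        (fun x : Fin n → α => (fun i : {i // i ∈ S} => x i) = xs)
      = Finset.univ.filter (fun x : Fin n → α => ∀ i ∈ S, x i = w i) := by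
    ext x
    simp only [Finset.mem_filter, Finset.mem_univ, true_and]
    constructor
    · intro h2 i hi
      rw [hw]; simp only [hi, dif_pos]
      exact congrFun h2 ⟨i, hi⟩
    · intro h
      funext i
      have := h i.1 i.2
      rw [hw] at this
      simpa [i.2] using this
  have hXprod : ∀ x : Fin n → α,
      prob' μ (fun ω (i : Fin n) => X i ω) x = ∏ i, prob' μ (X i) (x i) := hX
  rw [e1, hfilter1, e2, hfilter2]
  rw [Finset.sum_congr rfl fun x _ => hXprod x, Finset.sum_congr rfl fun x _ => hXprod x]
  rw [sum_constrained _ hp (insert a S) w, sum_constrained _ hp S w]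
  rw [Finset.prod_insert ha]
  congr 1
  rw [hw]
  simp [ha]

set_option maxHeartbeats 1000000

lemma CI_lemma {Ω α β : Type*} [Fintype Ω] [Fintype α] [DecidableEq α]
    [Fintype β] [DecidableEq β] {n : ℕ} (μ : Ω → ℝ) (hμ0 : ∀ ω, 0 ≤ μ ω)
    (X : Fin n → Ω → α) (Y : Fin n → Ω → β)
    (hY : ∀ (x : Fin n → α) (y : Fin n → β),
      prob' μ (fun ω => ((fun i => X i ω), (fun j => Y j ω))) (x, y) *
          (prob' μ (fun ω i => X i ω) x) ^ (n - 1)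
        = ∏ j, prob' μ (fun ω => (Y j ω, fun i => X i ω)) (y j, x))
    (hn : 0 < n) :
    ∀ (S : Finset (Fin n)) (ys : Fin n → β) (x : Fin n → α),
      prob' μ (fun ω => ((fun j : {j // j ∈ S} => Y j ω), (fun i : Fin n => X i ω)))
          ((fun j : {j // j ∈ S} => ys j), x)
        * (prob' μ (fun ω (i : Fin n) => X i ω) x) ^ S.card
      = prob' μ (fun ω (i : Fin n) => X i ω) x
        * ∏ j ∈ S, prob' μ (fun ω => (Y j ω, fun i => X i ω)) (ys j, x) := by
  classical
  -- base case : S = univ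
  have base : ∀ (ys : Fin n → β) (x : Fin n → α),
      prob' μ (fun ω => ((fun j : {j // j ∈ (Finset.univ : Finset (Fin n))} => Y j ω),
          (fun i : Fin n => X i ω)))
        ((fun j : {j // j ∈ (Finset.univ : Finset (Fin n))} => ys j), x)
        * (prob' μ (fun ω (i : Fin n) => X i ω) x) ^ (Finset.univ : Finset (Fin n)).card
      = prob' μ (fun ω (i : Fin n) => X i ω) x
        * ∏ j ∈ (Finset.univ : Finset (Fin n)),
            prob' μ (fun ω => (Y j ω, fun i => X i ω)) (ys j, x) := by
    intro ys x
    have hrec : prob' μ (fun ω => ((fun j : {j // j ∈ (Finset.univ : Finset (Fin n))} => Y j ω),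
          (fun i : Fin n => X i ω)))
        ((fun j : {j // j ∈ (Finset.univ : Finset (Fin n))} => ys j), x)
        = prob' μ (fun ω => ((fun i => X i ω), (fun j => Y j ω))) (x, ys) :=
      prob'_comp' μ
        (f := fun p : (Fin n → α) × (Fin n → β) =>
          ((fun j : {j : Fin n // j ∈ (Finset.univ : Finset (Fin n))} => p.2 j), p.1))
        (fun p q h => by
          have h1 := congrArg Prod.fst h
          have h2 := congrArg Prod.snd h
          simp only at h1 h2
          exact Prod.ext h2 (funext fun j => congrFun h1 ⟨j, Finset.mem_univ j⟩))
        (fun ω => ((fun i => X i ω), (fun j => Y j ω))) (x, ys) _ rfl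
    have hcard : (Finset.univ : Finset (Fin n)).card = n := by simp
    have hn1 : (n - 1) + 1 = n := Nat.succ_pred_eq_of_pos hn
    have hpow : (prob' μ (fun ω (i : Fin n) => X i ω) x) ^ n
        = (prob' μ (fun ω (i : Fin n) => X i ω) x) ^ (n - 1)
          * prob' μ (fun ω (i : Fin n) => X i ω) x := by
      rw [← pow_succ, hn1]
    rw [hrec, hcard, hpow]
    calc prob' μ (fun ω => ((fun i => X i ω), (fun j => Y j ω))) (x, ys)
          * ((prob' μ (fun ω (i : Fin n) => X i ω) x) ^ (n - 1)
            * prob' μ (fun ω (i : Fin n) => X i ω) x)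
        = (prob' μ (fun ω => ((fun i => X i ω), (fun j => Y j ω))) (x, ys)
            * (prob' μ (fun ω (i : Fin n) => X i ω) x) ^ (n - 1))
          * prob' μ (fun ω (i : Fin n) => X i ω) x := by ring
      _ = (∏ j, prob' μ (fun ω => (Y j ω, fun i => X i ω)) (ys j, x))
          * prob' μ (fun ω (i : Fin n) => X i ω) x := by rw [hY x ys]
      _ = _ := by rw [mul_comm]
  -- erase step
  have step : ∀ (S : Finset (Fin n)) (k : Fin n), k ∈ S →
      (∀ (ys : Fin n → β) (x : Fin n → α),
        prob' μ (fun ω => ((fun j : {j // j ∈ S} => Y j ω), (fun i : Fin n => X i ω)))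
            ((fun j : {j // j ∈ S} => ys j), x)
          * (prob' μ (fun ω (i : Fin n) => X i ω) x) ^ S.card
        = prob' μ (fun ω (i : Fin n) => X i ω) x
          * ∏ j ∈ S, prob' μ (fun ω => (Y j ω, fun i => X i ω)) (ys j, x)) →
      ∀ (ys : Fin n → β) (x : Fin n → α),
        prob' μ (fun ω => ((fun j : {j // j ∈ S.erase k} => Y j ω), (fun i : Fin n => X i ω)))
            ((fun j : {j // j ∈ S.erase k} => ys j), x)
          * (prob' μ (fun ω (i : Fin n) => X i ω) x) ^ (S.erase k).card
        = prob' μ (fun ω (i : Fin n) => X i ω) x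
          * ∏ j ∈ S.erase k, prob' μ (fun ω => (Y j ω, fun i => X i ω)) (ys j, x) := by
    intro S k hk ihS ys x
    set p := prob' μ (fun ω (i : Fin n) => X i ω) x with hpdef
    set pS' := prob' μ (fun ω => ((fun j : {j // j ∈ S.erase k} => Y j ω),
        (fun i : Fin n => X i ω))) ((fun j : {j // j ∈ S.erase k} => ys j), x) with hpS'
    set C := ∏ j ∈ S.erase k, prob' μ (fun ω => (Y j ω, fun i => X i ω)) (ys j, x) with hC
    -- recoding per v
    have hrec : ∀ v : β,
        prob' μ (fun ω => ((fun j : {j // j ∈ S} => Y j ω), (fun i : Fin n => X i ω)))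
          ((fun j : {j // j ∈ S} => Function.update ys k v j), x)
        = prob' μ (fun ω => (Y k ω, ((fun j : {j // j ∈ S.erase k} => Y j ω),
            (fun i : Fin n => X i ω)))) (v, ((fun j : {j // j ∈ S.erase k} => ys j), x)) := by
      intro v
      refine (prob'_comp' μ
        (f := fun q : ({j // j ∈ S} → β) × (Fin n → α) =>
          (q.1 ⟨k, hk⟩, ((fun j : {j // j ∈ S.erase k} =>
            q.1 ⟨j.1, Finset.mem_of_mem_erase j.2⟩), q.2)))
        ?_ (fun ω => ((fun j : {j // j ∈ S} => Y j ω), (fun i : Fin n => X i ω)))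
        ((fun j : {j // j ∈ S} => Function.update ys k v j), x) _ ?_).symm
      · intro q1 q2 h
        have h1 := congrArg Prod.fst h
        have h2 := congrArg (fun z => z.2.1) h
        have h3 := congrArg (fun z => z.2.2) h
        simp only at h1 h2 h3
        refine Prod.ext (funext fun j => ?_) h3
        by_cases hj : j.1 = k
        · have : j = ⟨k, hk⟩ := Subtype.ext hj
          rw [this]; exact h1
        · have hj' : j.1 ∈ S.erase k := Finset.mem_erase.mpr ⟨hj, j.2⟩
          have := congrFun h2 ⟨j.1, hj'⟩
          simpa using this
      · refine Prod.ext ?_ (Prod.ext (funext fun j => ?_) rfl)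
        · exact Function.update_self k v ys
        · exact Function.update_of_ne (Finset.ne_of_mem_erase j.2) v ys
    -- product split per v
    have hprod : ∀ v : β,
        ∏ j ∈ S, prob' μ (fun ω => (Y j ω, fun i => X i ω)) (Function.update ys k v j, x)
        = prob' μ (fun ω => (Y k ω, fun i => X i ω)) (v, x) * C := by
      intro v
      rw [← Finset.insert_erase hk, Finset.prod_insert (Finset.notMem_erase k S),
        Function.update_self]
      congr 1
      refine Finset.prod_congr rfl fun j hj => ?_
      rw [Function.update_of_ne (Finset.ne_of_mem_erase hj)]
    -- sum the inductive hypothesis over v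
    have hsum : pS' * p ^ S.card = p * (prob' μ (fun ω (i : Fin n) => X i ω) x * C) := by
      have hL : ∑ v : β, prob' μ (fun ω => ((fun j : {j // j ∈ S} => Y j ω),
            (fun i : Fin n => X i ω))) ((fun j : {j // j ∈ S} => Function.update ys k v j), x)
            * p ^ S.card
          = pS' * p ^ S.card := by
        rw [← Finset.sum_mul]
        congr 1
        rw [Finset.sum_congr rfl fun v _ => hrec v]
        exact prob'_sum_fst μ (Y k) (fun ω => ((fun j : {j // j ∈ S.erase k} => Y j ω),
          (fun i : Fin n => X i ω))) ((fun j : {j // j ∈ S.erase k} => ys j), x)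
      have hR : ∑ v : β, p * ∏ j ∈ S, prob' μ (fun ω => (Y j ω, fun i => X i ω))
            (Function.update ys k v j, x)
          = p * (prob' μ (fun ω (i : Fin n) => X i ω) x * C) := by
        rw [Finset.sum_congr rfl fun v _ => by rw [hprod v]]
        rw [← Finset.mul_sum, ← Finset.sum_mul]
        rw [prob'_sum_fst μ (Y k) (fun ω (i : Fin n) => X i ω) x]
      rw [← hL, ← hR]
      exact Finset.sum_congr rfl fun v _ => ihS (Function.update ys k v) x
    have hcard : S.card = (S.erase k).card + 1 := (Finset.card_erase_add_one hk).symm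
    rw [hcard, pow_succ] at hsum
    by_cases hp0 : p = 0
    · have hdom : pS' = 0 := by
        have h1 : pS' ≤ p := by
          rw [hpS', hpdef]
          exact prob'_le_snd μ hμ0 (fun ω (j : {j // j ∈ S.erase k}) => Y j ω)
            (fun ω (i : Fin n) => X i ω) (fun j : {j // j ∈ S.erase k} => ys j) x
        have h2 : 0 ≤ pS' := prob'_nonneg μ hμ0 _ _
        linarith [hp0 ▸ h1]
      rw [hdom, hp0]
      simp
    · apply mul_right_cancel₀ hp0
      calc pS' * p ^ (S.erase k).card * p = pS' * (p ^ (S.erase k).card * p) := by ring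
        _ = p * (prob' μ (fun ω (i : Fin n) => X i ω) x * C) := hsum
        _ = p * C * p := by rw [← hpdef]; ring
  -- downward induction
  have main : ∀ T : Finset (Fin n), ∀ (ys : Fin n → β) (x : Fin n → α),
      prob' μ (fun ω => ((fun j : {j // j ∈ Tᶜ} => Y j ω), (fun i : Fin n => X i ω)))
          ((fun j : {j // j ∈ Tᶜ} => ys j), x)
        * (prob' μ (fun ω (i : Fin n) => X i ω) x) ^ Tᶜ.card
      = prob' μ (fun ω (i : Fin n) => X i ω) x
        * ∏ j ∈ Tᶜ, prob' μ (fun ω => (Y j ω, fun i => X i ω)) (ys j, x) := by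
    intro T
    induction T using Finset.induction_on with
    | empty => rw [Finset.compl_empty]; exact base
    | insert k T hk ih =>
      rw [Finset.compl_insert]
      exact step Tᶜ k (Finset.mem_compl.mpr hk) ih
  intro S ys x
  have := main Sᶜ ys x
  rwa [compl_compl] at this

/-- Under independence of the `X`'s and conditional independence of the `Y`'s
given all the `X`'s, the marginal difference of `F(A) = I(X_A ; Y_{Aᶜ} | X_{Aᶜ})`
satisfies
`F(A∪{a}) − F(A) = H(X_a|X_A) − H(X_a|Y_{(A∪a)ᶜ}, X_{(A∪a)ᶜ})
  − H(Y_a|Y_{(A∪a)ᶜ}, X_{Aᶜ}) + H(Y_a|X_{1..n})`. -/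
theorem stmt_9 {Ω α β : Type*} [Fintype Ω] [Fintype α] [DecidableEq α]
    [Fintype β] [DecidableEq β] {n : ℕ}
    (μ : Ω → ℝ) (hμ0 : ∀ ω, 0 ≤ μ ω) (hμ1 : ∑ ω, μ ω = 1)
    (X : Fin n → Ω → α) (Y : Fin n → Ω → β)
    (hX : ∀ x : Fin n → α,
      prob' μ (fun ω i => X i ω) x = ∏ i, prob' μ (X i) (x i))
    (hY : ∀ (x : Fin n → α) (y : Fin n → β),
      prob' μ (fun ω => ((fun i => X i ω), (fun j => Y j ω))) (x, y) *
          (prob' μ (fun ω i => X i ω) x) ^ (n - 1)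
        = ∏ j, prob' μ (fun ω => (Y j ω, fun i => X i ω)) (y j, x))
    (F : Finset (Fin n) → ℝ)
    (hF : ∀ A : Finset (Fin n), F A =
      condMI' μ (fun ω (i : {i // i ∈ A}) => X i ω)
        (fun ω (j : {j // j ∈ Aᶜ}) => Y j ω)
        (fun ω (i : {i // i ∈ Aᶜ}) => X i ω)) :
    ∀ (A : Finset (Fin n)) (a : Fin n), a ∉ A →
      F (insert a A) - F A =
        condEnt' μ (X a) (fun ω (i : {i // i ∈ A}) => X i ω)
        - condEnt' μ (X a) (fun ω =>
            ((fun j : {j // j ∈ (insert a A)ᶜ} => Y j ω),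
             (fun i : {i // i ∈ (insert a A)ᶜ} => X i ω)))
        - condEnt' μ (Y a) (fun ω =>
            ((fun j : {j // j ∈ (insert a A)ᶜ} => Y j ω),
             (fun i : {i // i ∈ Aᶜ} => X i ω)))
        + condEnt' μ (Y a) (fun ω (i : Fin n) => X i ω) := by
  intro A a ha
  have hn : 0 < n := a.pos
  have haAc : a ∈ Aᶜ := Finset.mem_compl.mpr ha
  have haB : a ∉ (insert a A)ᶜ := by simp
  have hBsub : ∀ {j : Fin n}, j ∈ (insert a A)ᶜ → j ∈ Aᶜ := by
    intro j hj
    rw [Finset.compl_insert] at hj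
    exact Finset.mem_of_mem_erase hj
  have hsplit : ∀ {i : Fin n}, i ∈ Aᶜ → i ≠ a → i ∈ (insert a A)ᶜ := by
    intro i hi hne
    rw [Finset.compl_insert, Finset.mem_erase]
    exact ⟨hne, hi⟩
  have hinsert : insert a ((insert a A)ᶜ) = Aᶜ := by
    rw [Finset.compl_insert]
    exact Finset.insert_erase haAc
  rw [hF, hF]
  simp only [condMI', condEnt']
  -- canonical recodings
  have h1 : ent' μ (fun ω => ((fun i : {i // i ∈ A} => X i ω), (fun i : {i // i ∈ Aᶜ} => X i ω)))
      = ent' μ (fun ω (i : Fin n) => X i ω) := by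
    refine ent'_comp μ
      (fun x : Fin n → α => ((fun i : {i // i ∈ A} => x i), (fun i : {i // i ∈ Aᶜ} => x i)))
      ?_ (fun ω (i : Fin n) => X i ω)
    intro x1 x2 h
    funext i
    by_cases hi : i ∈ A
    · exact congrFun (congrArg Prod.fst h) ⟨i, hi⟩
    · exact congrFun (congrArg Prod.snd h) ⟨i, Finset.mem_compl.mpr hi⟩
  have h1' : ent' μ (fun ω => ((fun i : {i // i ∈ insert a A} => X i ω),
        (fun i : {i // i ∈ (insert a A)ᶜ} => X i ω)))
      = ent' μ (fun ω (i : Fin n) => X i ω) := by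
    refine ent'_comp μ
      (fun x : Fin n → α => ((fun i : {i // i ∈ insert a A} => x i),
        (fun i : {i // i ∈ (insert a A)ᶜ} => x i)))
      ?_ (fun ω (i : Fin n) => X i ω)
    intro x1 x2 h
    funext i
    by_cases hi : i ∈ insert a A
    · exact congrFun (congrArg Prod.fst h) ⟨i, hi⟩
    · exact congrFun (congrArg Prod.snd h) ⟨i, Finset.mem_compl.mpr hi⟩
  have h4 : ent' μ (fun ω => (((fun i : {i // i ∈ A} => X i ω),
        (fun j : {j // j ∈ Aᶜ} => Y j ω)), (fun i : {i // i ∈ Aᶜ} => X i ω)))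
      = ent' μ (fun ω => ((fun j : {j // j ∈ Aᶜ} => Y j ω), (fun i : Fin n => X i ω))) := by
    refine ent'_comp μ
      (fun q : ({j // j ∈ Aᶜ} → β) × (Fin n → α) =>
        (((fun i : {i // i ∈ A} => q.2 i), q.1), (fun i : {i // i ∈ Aᶜ} => q.2 i)))
      ?_ (fun ω => ((fun j : {j // j ∈ Aᶜ} => Y j ω), (fun i : Fin n => X i ω)))
    intro q1 q2 h
    have hy := congrArg (fun z => z.1.2) h
    have hxa := congrArg (fun z => z.1.1) h
    have hxc := congrArg Prod.snd h
    simp only at hy hxa hxc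
    refine Prod.ext hy (funext fun i => ?_)
    by_cases hi : i ∈ A
    · exact congrFun hxa ⟨i, hi⟩
    · exact congrFun hxc ⟨i, Finset.mem_compl.mpr hi⟩
  have h4' : ent' μ (fun ω => (((fun i : {i // i ∈ insert a A} => X i ω),
        (fun j : {j // j ∈ (insert a A)ᶜ} => Y j ω)),
        (fun i : {i // i ∈ (insert a A)ᶜ} => X i ω)))
      = ent' μ (fun ω => ((fun j : {j // j ∈ (insert a A)ᶜ} => Y j ω),
        (fun i : Fin n => X i ω))) := by
    refine ent'_comp μ
      (fun q : ({j // j ∈ (insert a A)ᶜ} → β) × (Fin n → α) =>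
        (((fun i : {i // i ∈ insert a A} => q.2 i), q.1),
          (fun i : {i // i ∈ (insert a A)ᶜ} => q.2 i)))
      ?_ (fun ω => ((fun j : {j // j ∈ (insert a A)ᶜ} => Y j ω), (fun i : Fin n => X i ω)))
    intro q1 q2 h
    have hy := congrArg (fun z => z.1.2) h
    have hxa := congrArg (fun z => z.1.1) h
    have hxc := congrArg Prod.snd h
    simp only at hy hxa hxc
    refine Prod.ext hy (funext fun i => ?_)
    by_cases hi : i ∈ insert a A
    · exact congrFun hxa ⟨i, hi⟩
    · exact congrFun hxc ⟨i, Finset.mem_compl.mpr hi⟩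
  have h3 : ent' μ (fun ω => (X a ω, ((fun j : {j // j ∈ (insert a A)ᶜ} => Y j ω),
        (fun i : {i // i ∈ (insert a A)ᶜ} => X i ω))))
      = ent' μ (fun ω => ((fun j : {j // j ∈ (insert a A)ᶜ} => Y j ω),
        (fun i : {i // i ∈ Aᶜ} => X i ω))) := by
    refine ent'_comp μ
      (fun q : ({j // j ∈ (insert a A)ᶜ} → β) × ({i // i ∈ Aᶜ} → α) =>
        (q.2 ⟨a, haAc⟩, (q.1, (fun i : {i // i ∈ (insert a A)ᶜ} => q.2 ⟨i.1, hBsub i.2⟩))))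
      ?_ (fun ω => ((fun j : {j // j ∈ (insert a A)ᶜ} => Y j ω),
        (fun i : {i // i ∈ Aᶜ} => X i ω)))
    intro q1 q2 h
    have ha1 := congrArg Prod.fst h
    have hy := congrArg (fun z => z.2.1) h
    have hx := congrArg (fun z => z.2.2) h
    simp only at ha1 hy hx
    refine Prod.ext hy (funext fun i => ?_)
    by_cases hia : i.1 = a
    · have : i = ⟨a, haAc⟩ := Subtype.ext hia
      rw [this]; exact ha1
    · exact congrFun hx ⟨i.1, hsplit i.2 hia⟩
  have h5 : ent' μ (fun ω => (Y a ω, ((fun j : {j // j ∈ (insert a A)ᶜ} => Y j ω),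
        (fun i : {i // i ∈ Aᶜ} => X i ω))))
      = ent' μ (fun ω => ((fun j : {j // j ∈ Aᶜ} => Y j ω),
        (fun i : {i // i ∈ Aᶜ} => X i ω))) := by
    refine ent'_comp μ
      (fun q : ({j // j ∈ Aᶜ} → β) × ({i // i ∈ Aᶜ} → α) =>
        (q.1 ⟨a, haAc⟩, ((fun j : {j // j ∈ (insert a A)ᶜ} => q.1 ⟨j.1, hBsub j.2⟩), q.2)))
      ?_ (fun ω => ((fun j : {j // j ∈ Aᶜ} => Y j ω), (fun i : {i // i ∈ Aᶜ} => X i ω)))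
    intro q1 q2 h
    have ha1 := congrArg Prod.fst h
    have hy := congrArg (fun z => z.2.1) h
    have hx := congrArg (fun z => z.2.2) h
    simp only at ha1 hy hx
    refine Prod.ext (funext fun j => ?_) hx
    by_cases hja : j.1 = a
    · have : j = ⟨a, haAc⟩ := Subtype.ext hja
      rw [this]; exact ha1
    · exact congrFun hy ⟨j.1, hsplit j.2 hja⟩
  have h6 : ent' μ (fun ω => (Y a ω, ((fun j : {j // j ∈ (insert a A)ᶜ} => Y j ω),
        (fun i : Fin n => X i ω))))
      = ent' μ (fun ω => ((fun j : {j // j ∈ Aᶜ} => Y j ω), (fun i : Fin n => X i ω))) := by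
    refine ent'_comp μ
      (fun q : ({j // j ∈ Aᶜ} → β) × (Fin n → α) =>
        (q.1 ⟨a, haAc⟩, ((fun j : {j // j ∈ (insert a A)ᶜ} => q.1 ⟨j.1, hBsub j.2⟩), q.2)))
      ?_ (fun ω => ((fun j : {j // j ∈ Aᶜ} => Y j ω), (fun i : Fin n => X i ω)))
    intro q1 q2 h
    have ha1 := congrArg Prod.fst h
    have hy := congrArg (fun z => z.2.1) h
    have hx := congrArg (fun z => z.2.2) h
    simp only at ha1 hy hx
    refine Prod.ext (funext fun j => ?_) hx
    by_cases hja : j.1 = a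
    · have : j = ⟨a, haAc⟩ := Subtype.ext hja
      rw [this]; exact ha1
    · exact congrFun hy ⟨j.1, hsplit j.2 hja⟩
  have hE1a : ent' μ (fun ω (i : {i // i ∈ Aᶜ}) => X i ω)
      = ent' μ (fun ω => (X a ω, (fun i : {i // i ∈ (insert a A)ᶜ} => X i ω))) := by
    refine (ent'_comp μ
      (fun q : {i // i ∈ Aᶜ} → α =>
        (q ⟨a, haAc⟩, (fun i : {i // i ∈ (insert a A)ᶜ} => q ⟨i.1, hBsub i.2⟩)))
      ?_ (fun ω (i : {i // i ∈ Aᶜ}) => X i ω)).symm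
    intro q1 q2 h
    have ha1 := congrArg Prod.fst h
    have hx := congrArg Prod.snd h
    simp only at ha1 hx
    funext i
    by_cases hia : i.1 = a
    · have : i = ⟨a, haAc⟩ := Subtype.ext hia
      rw [this]; exact ha1
    · exact congrFun hx ⟨i.1, hsplit i.2 hia⟩
  have hE1b : ent' μ (fun ω => (X a ω, (fun i : {i // i ∈ (insert a A)ᶜ} => X i ω)))
      = ent' μ (X a) + ent' μ (fun ω (i : {i // i ∈ (insert a A)ᶜ}) => X i ω) :=
    ent'_pair_of_indep μ hμ1 (X a) (fun ω (i : {i // i ∈ (insert a A)ᶜ}) => X i ω)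
      (fun z w => probX_pair μ hμ1 X hX ((insert a A)ᶜ) a haB z w)
  have hE2 : ent' μ (fun ω => (X a ω, (fun i : {i // i ∈ A} => X i ω)))
      = ent' μ (X a) + ent' μ (fun ω (i : {i // i ∈ A}) => X i ω) :=
    ent'_pair_of_indep μ hμ1 (X a) (fun ω (i : {i // i ∈ A}) => X i ω)
      (fun z w => probX_pair μ hμ1 X hX A a ha z w)
  have hcard : (Aᶜ : Finset (Fin n)).card = ((insert a A)ᶜ : Finset (Fin n)).card + 1 := by
    rw [← hinsert, Finset.card_insert_of_notMem haB]
  have hPair : ∀ (u : β) (v : {j // j ∈ (insert a A)ᶜ} → β) (w : Fin n → α),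
      prob' μ (fun ω => (Y a ω, (fun j : {j // j ∈ (insert a A)ᶜ} => Y j ω),
          (fun i : Fin n => X i ω))) (u, v, w)
        * prob' μ (fun ω (i : Fin n) => X i ω) w
      = prob' μ (fun ω => (Y a ω, fun i : Fin n => X i ω)) (u, w)
        * prob' μ (fun ω => ((fun j : {j // j ∈ (insert a A)ᶜ} => Y j ω),
            (fun i : Fin n => X i ω))) (v, w) := by
    intro ya yb x
    set ys : Fin n → β := fun j => if h : j ∈ (insert a A)ᶜ then yb ⟨j, h⟩ else ya with hys
    have hysa : ys a = ya := by rw [hys]; exact dif_neg haB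
    have hrec : prob' μ (fun ω => (Y a ω, (fun j : {j // j ∈ (insert a A)ᶜ} => Y j ω),
          (fun i : Fin n => X i ω))) (ya, yb, x)
        = prob' μ (fun ω => ((fun j : {j // j ∈ Aᶜ} => Y j ω), (fun i : Fin n => X i ω)))
            ((fun j : {j // j ∈ Aᶜ} => ys j), x) := by
      refine prob'_comp' μ
        (f := fun q : ({j // j ∈ Aᶜ} → β) × (Fin n → α) =>
          (q.1 ⟨a, haAc⟩, ((fun j : {j // j ∈ (insert a A)ᶜ} => q.1 ⟨j.1, hBsub j.2⟩), q.2)))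
        ?_ (fun ω => ((fun j : {j // j ∈ Aᶜ} => Y j ω), (fun i : Fin n => X i ω)))
        ((fun j : {j // j ∈ Aᶜ} => ys j), x) (ya, yb, x) ?_
      · intro q1 q2 h
        have ha1 := congrArg Prod.fst h
        have hy := congrArg (fun z => z.2.1) h
        have hx := congrArg (fun z => z.2.2) h
        simp only at ha1 hy hx
        refine Prod.ext (funext fun j => ?_) hx
        by_cases hja : j.1 = a
        · have : j = ⟨a, haAc⟩ := Subtype.ext hja
          rw [this]; exact ha1
        · exact congrFun hy ⟨j.1, hsplit j.2 hja⟩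
      · refine Prod.ext hysa (Prod.ext (funext fun j => ?_) rfl)
        show ys j.1 = yb j
        rw [hys]
        exact dif_pos j.2
    have hyb : (fun j : {j // j ∈ (insert a A)ᶜ} => ys j.1) = yb := by
      funext j
      rw [hys]
      exact dif_pos j.2
    have hAc := CI_lemma μ hμ0 X Y hY hn Aᶜ ys x
    have hB := CI_lemma μ hμ0 X Y hY hn ((insert a A)ᶜ) ys x
    rw [hyb] at hB
    have hprodsplit : ∏ j ∈ Aᶜ, prob' μ (fun ω => (Y j ω, fun i => X i ω)) (ys j, x)
        = prob' μ (fun ω => (Y a ω, fun i => X i ω)) (ya, x)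
          * ∏ j ∈ (insert a A)ᶜ, prob' μ (fun ω => (Y j ω, fun i => X i ω)) (ys j, x) := by
      rw [← hinsert, Finset.prod_insert haB, hysa]
    rw [hprodsplit] at hAc
    rw [hrec]
    by_cases hp0 : prob' μ (fun ω (i : Fin n) => X i ω) x = 0
    · have hpa : prob' μ (fun ω => (Y a ω, fun i : Fin n => X i ω)) (ya, x) = 0 := by
        have hle := prob'_le_snd μ hμ0 (Y a) (fun ω (i : Fin n) => X i ω) ya x
        have hge := prob'_nonneg μ hμ0 (fun ω => (Y a ω, fun i : Fin n => X i ω)) (ya, x)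
        rw [hp0] at hle
        linarith
      rw [hp0, hpa]
      ring
    · apply mul_right_cancel₀ (pow_ne_zero ((insert a A)ᶜ : Finset (Fin n)).card hp0)
      calc prob' μ (fun ω => ((fun j : {j // j ∈ Aᶜ} => Y j ω), (fun i : Fin n => X i ω)))
              ((fun j : {j // j ∈ Aᶜ} => ys j), x)
            * prob' μ (fun ω (i : Fin n) => X i ω) x
            * prob' μ (fun ω (i : Fin n) => X i ω) x ^ ((insert a A)ᶜ : Finset (Fin n)).card
          = prob' μ (fun ω => ((fun j : {j // j ∈ Aᶜ} => Y j ω), (fun i : Fin n => X i ω)))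
              ((fun j : {j // j ∈ Aᶜ} => ys j), x)
            * prob' μ (fun ω (i : Fin n) => X i ω) x ^ (Aᶜ : Finset (Fin n)).card := by
            rw [hcard, pow_succ]; ring
        _ = prob' μ (fun ω (i : Fin n) => X i ω) x
            * (prob' μ (fun ω => (Y a ω, fun i => X i ω)) (ya, x)
              * ∏ j ∈ (insert a A)ᶜ, prob' μ (fun ω => (Y j ω, fun i => X i ω)) (ys j, x)) :=
            hAc
        _ = prob' μ (fun ω => (Y a ω, fun i => X i ω)) (ya, x)
            * (prob' μ (fun ω (i : Fin n) => X i ω) x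
              * ∏ j ∈ (insert a A)ᶜ, prob' μ (fun ω => (Y j ω, fun i => X i ω)) (ys j, x)) := by
            ring
        _ = prob' μ (fun ω => (Y a ω, fun i => X i ω)) (ya, x)
            * (prob' μ (fun ω => ((fun j : {j // j ∈ (insert a A)ᶜ} => Y j ω),
                (fun i : Fin n => X i ω))) (yb, x)
              * prob' μ (fun ω (i : Fin n) => X i ω) x
                ^ ((insert a A)ᶜ : Finset (Fin n)).card) := by
            rw [hB]
        _ = _ := by ring
  have hE3 : ent' μ (fun ω => (Y a ω, (fun j : {j // j ∈ (insert a A)ᶜ} => Y j ω),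
        (fun i : Fin n => X i ω))) + ent' μ (fun ω (i : Fin n) => X i ω)
      = ent' μ (fun ω => (Y a ω, fun i : Fin n => X i ω))
        + ent' μ (fun ω => ((fun j : {j // j ∈ (insert a A)ᶜ} => Y j ω),
            (fun i : Fin n => X i ω))) :=
    ent'_condIndep μ hμ0 (Y a) (fun ω (j : {j // j ∈ (insert a A)ᶜ}) => Y j ω)
      (fun ω (i : Fin n) => X i ω) hPair
  linarith [h1, h1', h4, h4', h3, h5, h6, hE1a, hE1b, hE2, hE3]
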